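/- Let M be a Peano continuum (compact, connected, locally connected, metrizable). Then every cut pair {ζ,ξ} of M has only finitely many complementary components, and ζ and ξ both lie in the closure of each component of M \ {ζ,ξ}. -/

import Mathlib

/-- A cut point of a topological space: a point whose complement is disconnected. -/
def IsCutPoint (M : Type*) [TopologicalSpace M] (η : M) : Prop :=
  ¬ IsPreconnected ({η}ᶜ : Set M)

/-- A cut pair: two distinct points whose complement is disconnected, neither being a cut point. -/
def IsCutPair (M : Type*) [TopologicalSpace M] (ζ ξ : M) : Prop :=
  ζ ≠ ξ ∧ ¬ IsPreconnected (({ζ, ξ} : Set M)ᶜ) ∧ ¬ IsCutPoint M ζ ∧ ¬ IsCutPoint M ξ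

open Set

/-- The closure of a connected component of an open set in a locally connected space
stays inside the component together with the complement of the open set. -/
private lemma closure_cc_subset {M : Type*} [TopologicalSpace M] [LocallyConnectedSpace M]
    {U : Set M} (hU : IsOpen U) (x : M) :
    closure (connectedComponentIn U x) ⊆ connectedComponentIn U x ∪ Uᶜ := by
  intro y hy
  by_cases hyU : y ∈ U
  · left
    have hopen : IsOpen (connectedComponentIn U y) := hU.connectedComponentIn
    have hnb : connectedComponentIn U y ∈ nhds y := hopen.mem_nhds (mem_connectedComponentIn hyU)
    obtain ⟨z, hz1, hz2⟩ := mem_closure_iff_nhds.mp hy _ hnb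
    have e1 : connectedComponentIn U y = connectedComponentIn U z := connectedComponentIn_eq hz1
    have e2 : connectedComponentIn U x = connectedComponentIn U z := connectedComponentIn_eq hz2
    rw [e2, ← e1]
    exact mem_connectedComponentIn hyU
  · exact Or.inr hyU

/-- One point of a cut pair lies in the closure of each complementary component,
given that the *other* point is not a cut point. -/
private lemma pt_in_closure {M : Type*} [TopologicalSpace M] [LocallyConnectedSpace M]
    [T1Space M] {ζ ξ : M} (hne : ζ ≠ ξ) (hξ : IsPreconnected ({ξ}ᶜ : Set M))
    {x : M} (hx : x ∈ (({ζ, ξ} : Set M)ᶜ)) :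
    ζ ∈ closure (connectedComponentIn (({ζ, ξ} : Set M)ᶜ) x) := by
  have hUopen : IsOpen (({ζ, ξ} : Set M)ᶜ) :=
    (((Set.finite_singleton ξ).insert ζ).isClosed).isOpen_compl
  set U := (({ζ, ξ} : Set M)ᶜ) with hUdef
  set C := connectedComponentIn U x with hC
  by_contra hζ
  have hxζ : x ≠ ζ := fun e => hx (by simp [e])
  have hxξ : x ≠ ξ := fun e => hx (by simp [e])
  have hCopen : IsOpen C := hUopen.connectedComponentIn
  have hsub : closure C ⊆ C ∪ {ζ, ξ} := by
    have := closure_cc_subset hUopen x (U := U)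
    simpa [hUdef, compl_compl] using this
  obtain ⟨y, hy⟩ := hξ C (closure C)ᶜ hCopen isClosed_closure.isOpen_compl
    (by
      intro y hy'
      by_cases hyc : y ∈ closure C
      · left
        rcases hsub hyc with h1 | h2
        · exact h1
        · rcases h2 with rfl | rfl
          · exact absurd hyc hζ
          · exact absurd rfl hy'
      · exact Or.inr hyc)
    ⟨x, hxξ, mem_connectedComponentIn hx⟩
    ⟨ζ, hne, hζ⟩
  exact hy.2.2 (subset_closure hy.2.1)

/-- In a Peano continuum, a cut pair has only finitely many complementary components, and
both points of the pair lie in the closure of each component of the complement. -/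
theorem stmt13 {M : Type*} [TopologicalSpace M] [CompactSpace M] [ConnectedSpace M]
    [LocallyConnectedSpace M] [TopologicalSpace.MetrizableSpace M]
    (ζ ξ : M) (h : IsCutPair M ζ ξ) :
    {C : Set M | ∃ x ∈ (({ζ, ξ} : Set M)ᶜ),
        C = connectedComponentIn (({ζ, ξ} : Set M)ᶜ) x}.Finite ∧
    ∀ x ∈ (({ζ, ξ} : Set M)ᶜ),
      ζ ∈ closure (connectedComponentIn (({ζ, ξ} : Set M)ᶜ) x) ∧
      ξ ∈ closure (connectedComponentIn (({ζ, ξ} : Set M)ᶜ) x) := by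
  classical
  letI := TopologicalSpace.metrizableSpaceMetric M
  obtain ⟨hne, hdisc, hcζ, hcξ⟩ := h
  have hPζ : IsPreconnected ({ζ}ᶜ : Set M) := not_not.mp hcζ
  have hPξ : IsPreconnected ({ξ}ᶜ : Set M) := not_not.mp hcξ
  set U := (({ζ, ξ} : Set M)ᶜ) with hUdef
  have hUopen : IsOpen U :=
    (((Set.finite_singleton ξ).insert ζ).isClosed).isOpen_compl
  -- part 2
  have part2 : ∀ x ∈ U, ζ ∈ closure (connectedComponentIn U x) ∧
      ξ ∈ closure (connectedComponentIn U x) := by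
    intro x hx
    refine ⟨pt_in_closure hne hPξ hx, ?_⟩
    have hx' : x ∈ (({ξ, ζ} : Set M)ᶜ) := by
      rwa [Set.pair_comm ξ ζ]
    have := pt_in_closure hne.symm hPζ hx'
    rwa [Set.pair_comm ξ ζ] at this
  refine ⟨?_, part2⟩
  -- part 1 : finiteness
  -- separate ζ and ξ by disjoint open sets, shrink to connected ones
  obtain ⟨A, B, hAo, hBo, hζA, hξB, hAB⟩ := t2_separation hne
  obtain ⟨Vζ, hVζA, hVζo, hζV, hVζconn⟩ :=
    locallyConnectedSpace_iff_subsets_isOpen_isConnected.mp ‹_› ζ A (hAo.mem_nhds hζA)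
  obtain ⟨Vξ, hVξB, hVξo, hξV, hVξconn⟩ :=
    locallyConnectedSpace_iff_subsets_isOpen_isConnected.mp ‹_› ξ B (hBo.mem_nhds hξB)
  -- the open cover
  set f : M → Set M := fun x =>
    if x = ζ then Vζ else if x = ξ then Vξ else connectedComponentIn U x with hf
  have hfopen : ∀ x, IsOpen (f x) := by
    intro x
    simp only [hf]
    split_ifs
    · exact hVζo
    · exact hVξo
    · exact hUopen.connectedComponentIn
  have hcover : (Set.univ : Set M) ⊆ ⋃ x, f x := by
    intro y _
    by_cases h1 : y = ζ
    · exact Set.mem_iUnion.mpr ⟨ζ, by simp only [hf, if_pos rfl]; exact h1 ▸ hζV⟩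
    by_cases h2 : y = ξ
    · exact Set.mem_iUnion.mpr ⟨ξ, by simp only [hf, if_neg hne.symm, if_pos rfl]; exact h2 ▸ hξV⟩
    · refine Set.mem_iUnion.mpr ⟨y, ?_⟩
      have hyU : y ∈ U := by simp [hUdef, h1, h2]
      simp only [hf, if_neg h1, if_neg h2]
      exact mem_connectedComponentIn hyU
  obtain ⟨t, ht⟩ := CompactSpace.isCompact_univ.elim_finite_subcover f hfopen hcover
  -- every component equals one indexed by t
  refine Set.Finite.subset (t.finite_toSet.image (fun x => connectedComponentIn U x)) ?_
  rintro C ⟨y, hyU, rfl⟩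
  -- the component is not inside Vζ ∪ Vξ
  have hnotsub : ¬ connectedComponentIn U y ⊆ Vζ ∪ Vξ := by
    intro hsub
    rcases (isPreconnected_connectedComponentIn).subset_or_subset hVζo hVξo (Disjoint.mono hVζA hVξB hAB) hsub with hl | hr
    · have h1 : ξ ∈ closure A := closure_mono hVζA (closure_mono hl (part2 y hyU).2)
      have h3 : ξ ∈ closure (B ∩ A) := hBo.inter_closure ⟨hξB, h1⟩
      rw [Set.disjoint_iff_inter_eq_empty.mp hAB.symm, closure_empty] at h3
      exact h3
    · have h1 : ζ ∈ closure B := closure_mono hVξB (closure_mono hr (part2 y hyU).1)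
      have h3 : ζ ∈ closure (A ∩ B) := hAo.inter_closure ⟨hζA, h1⟩
      rw [Set.disjoint_iff_inter_eq_empty.mp hAB, closure_empty] at h3
      exact h3
  obtain ⟨z, hzC, hzV⟩ := Set.not_subset.mp hnotsub
  have hz' : z ∈ ⋃ x ∈ t, f x := ht (Set.mem_univ z)
  obtain ⟨w, hwt, hwz⟩ := by simpa using hz'
  have hwζ : w ≠ ζ := by
    rintro rfl
    simp only [hf, if_pos rfl] at hwz
    exact hzV (Or.inl hwz)
  have hwξ : w ≠ ξ := by
    rintro rfl
    simp only [hf, if_neg hne.symm, if_pos rfl] at hwz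
    exact hzV (Or.inr hwz)
  simp only [hf, if_neg hwζ, if_neg hwξ] at hwz
  refine ⟨w, hwt, ?_⟩
  exact (connectedComponentIn_eq hwz).trans (connectedComponentIn_eq hzC).symm
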